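/- Let R be a connected commutative ring, let f ∈ R[X] be separable over R, let S be a nontrivial commutative ring, and let φ : R → S be a ring homomorphism. Then φ is injective on the set of roots of f: if r, s ∈ R satisfy f(r) = f(s) = 0 and φ(r) = φ(s), then r = s. -/
import Mathlib

/-- Proposition `degbd`(b): in a connected commutative ring `R`, if `f ∈ R[X]`
is separable over `R`, `S` is a nontrivial commutative ring, and `φ : R → S` is
a ring homomorphism, then `φ` is injective on the set of roots of `f`. -/
theorem stmt_2 {R S : Type*} [CommRing R] [Nontrivial R] [CommRing S] [Nontrivial S]
    (hconn : ∀ e : R, IsIdempotentElem e → e = 0 ∨ e = 1)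
    (f : Polynomial R) (hf : f.Separable) (φ : R →+* S)
    (r s : R) (hr : f.eval r = 0) (hs : f.eval s = 0) (hφ : φ r = φ s) :
    r = s := by
  obtain ⟨a, b, hab⟩ := hf
  -- f'(s) is a unit
  have hfs : (b.eval s) * f.derivative.eval s = 1 := by
    have := congrArg (Polynomial.eval s) hab
    simpa [hs] using this
  set d := r - s with hd
  obtain ⟨k, hk⟩ := f.binomExpansion s d
  have hsum : s + d = r := by ring
  rw [hsum, hr, hs, zero_add] at hk
  -- 0 = f'(s)*d + k*d^2
  set m : R := -(k * b.eval s) with hm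
  have hdd : d = d ^ 2 * m := by
    have h1 : f.derivative.eval s * d = -(k * d ^ 2) := by linear_combination -hk
    calc d = (b.eval s * f.derivative.eval s) * d := by rw [hfs]; ring
      _ = b.eval s * (f.derivative.eval s * d) := by ring
      _ = b.eval s * (-(k * d ^ 2)) := by rw [h1]
      _ = d ^ 2 * m := by rw [hm]; ring
  have hidem : IsIdempotentElem (d * m) := by
    unfold IsIdempotentElem
    calc d * m * (d * m) = (d ^ 2 * m) * m := by ring
      _ = d * m := by rw [← hdd]
  rcases hconn _ hidem with h0 | h1
  · have : d = 0 := by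
      calc d = d ^ 2 * m := hdd
        _ = d * (d * m) := by ring
        _ = 0 := by rw [h0, mul_zero]
    exact sub_eq_zero.mp this
  · exfalso
    have : φ d = 0 := by simp [hd, map_sub, hφ]
    have h1' : φ (d * m) = 1 := by rw [h1, map_one]
    rw [map_mul, this, zero_mul] at h1'
    exact zero_ne_one h1'
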